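/- Let ℓ : Δ^c × Δ^c → ℝ≥0 be differentiable in its first argument with ‖∇_p ℓ(p, q)‖_1 ≤ M whenever max_k p_k − min_k p_k < 1/c. Fix f ∈ Δ^c with max_k f_k − min_k f_k < 1/c, fix ỹ, and let L(α) = ℓ(P̄_α f, e_ỹ). Then ‖∇_α L(α)‖_1 ≤ (cM/4)(max_k f_k − min_k f_k) for all α ∈ ℝ^c. -/

import Mathlib

open Matrix Finset

noncomputable def softmax {c : ℕ} (α : Fin c → ℝ) : Fin c → ℝ :=
  fun i => Real.exp (α i) / ∑ j, Real.exp (α j)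

/-- Permutation matrix swapping coordinates `a` and `b`. -/
def swapMat {c : ℕ} (a b : Fin c) : Matrix (Fin c) (Fin c) ℝ :=
  fun i j => if Equiv.swap a b i = j then 1 else 0

/-- The instance-dependent permutation layer `P̄_α = ∑ i, S(α)_i P(y, i)`. -/
noncomputable def permLayer {c : ℕ} (α : Fin c → ℝ) (y : Fin c) :
    Matrix (Fin c) (Fin c) ℝ :=
  ∑ i, softmax α i • swapMat y i

lemma aux_sum_identity {c : ℕ} (s : ℝ) (E w v : Fin c → ℝ) :
    ∑ x, E x * s⁻¹ * (w x - ∑ i, E i * s⁻¹ * w i) * v x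
      = ∑ x, w x * (E x * (-(s ^ 2)⁻¹ * ∑ i, E i * v i) + s⁻¹ * (E x * v x)) := by
  have e1 : (∑ i, E i * s⁻¹ * w i) = s⁻¹ * ∑ i, E i * w i := by
    rw [Finset.mul_sum]; exact Finset.sum_congr rfl fun i _ => by ring
  calc ∑ x, E x * s⁻¹ * (w x - ∑ i, E i * s⁻¹ * w i) * v x
      = ∑ x, (s⁻¹ * (E x * w x * v x)
          - ((s ^ 2)⁻¹ * ∑ i, E i * w i) * (E x * v x)) := by
        rw [e1]
        exact Finset.sum_congr rfl fun x _ => by rw [sq, mul_inv]; ring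
    _ = s⁻¹ * (∑ x, E x * w x * v x)
          - ((s ^ 2)⁻¹ * ∑ i, E i * w i) * ∑ x, E x * v x := by
        rw [Finset.sum_sub_distrib, ← Finset.mul_sum, ← Finset.mul_sum]
    _ = s⁻¹ * (∑ x, E x * w x * v x)
          + (-(s ^ 2)⁻¹ * ∑ i, E i * v i) * ∑ x, E x * w x := by ring
    _ = ∑ x, (s⁻¹ * (E x * w x * v x)
          + (-(s ^ 2)⁻¹ * ∑ i, E i * v i) * (E x * w x)) := by
        rw [Finset.sum_add_distrib, ← Finset.mul_sum, ← Finset.mul_sum]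
    _ = ∑ x, w x * (E x * (-(s ^ 2)⁻¹ * ∑ i, E i * v i) + s⁻¹ * (E x * v x)) :=
        Finset.sum_congr rfl fun x _ => by ring

lemma softmax_nonneg {c : ℕ} (hc : 0 < c) (α : Fin c → ℝ) (i : Fin c) : 0 ≤ softmax α i :=
  div_nonneg (Real.exp_pos _).le
    (Finset.sum_pos (fun j _ => Real.exp_pos _) ⟨⟨0, hc⟩, mem_univ _⟩).le

lemma softmax_sum {c : ℕ} (hc : 0 < c) (α : Fin c → ℝ) : ∑ i, softmax α i = 1 := by
  have hspos : 0 < ∑ j, Real.exp (α j) :=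
    Finset.sum_pos (fun j _ => Real.exp_pos _) ⟨⟨0, hc⟩, mem_univ _⟩
  simp only [softmax]
  rw [← Finset.sum_div, div_self hspos.ne']

lemma softmax_le_one {c : ℕ} (hc : 0 < c) (α : Fin c → ℝ) (i : Fin c) : softmax α i ≤ 1 := by
  rw [← softmax_sum hc α]
  exact Finset.single_le_sum (fun j _ => softmax_nonneg hc α j) (mem_univ i)

lemma permLayer_mulVec {c : ℕ} (β : Fin c → ℝ) (y : Fin c) (f : Fin c → ℝ) :
    (permLayer β y).mulVec f = fun k => ∑ i, softmax β i * f (Equiv.swap y i k) := by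
  funext k
  simp only [permLayer, Matrix.mulVec, dotProduct, Matrix.sum_apply,
    Matrix.smul_apply, swapMat, smul_eq_mul, Finset.sum_mul]
  rw [Finset.sum_comm]
  exact Finset.sum_congr rfl fun i _ => by simp [mul_ite, ite_mul]

lemma softmax_comb_hasFDerivAt {c : ℕ} (hc : 0 < c) (α : Fin c → ℝ) (w : Fin c → ℝ) :
    HasFDerivAt (fun β : Fin c → ℝ => ∑ i, softmax β i * w i)
      (∑ j, (softmax α j * (w j - ∑ i, softmax α i * w i)) •
        (ContinuousLinearMap.proj j : (Fin c → ℝ) →L[ℝ] ℝ)) α := by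
  have hs' : HasFDerivAt (fun β : Fin c → ℝ => ∑ j, Real.exp (β j))
      (∑ j, Real.exp (α j) • (ContinuousLinearMap.proj j : (Fin c → ℝ) →L[ℝ] ℝ)) α :=
    HasFDerivAt.fun_sum fun j _ => (hasFDerivAt_apply j α).exp
  have hspos : 0 < ∑ j, Real.exp (α j) :=
    Finset.sum_pos (fun j _ => Real.exp_pos _) ⟨⟨0, hc⟩, mem_univ _⟩
  have hinv := (hasDerivAt_inv hspos.ne').comp_hasFDerivAt α hs'
  have hraw := HasFDerivAt.fun_sum (u := univ)
    (fun i _ => ((hasFDerivAt_apply i α).exp.mul hinv).mul_const (w i))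
  have hfun : (fun β : Fin c → ℝ => ∑ i, softmax β i * w i)
      = fun β : Fin c → ℝ => ∑ i, Real.exp (β i) * (∑ j, Real.exp (β j))⁻¹ * w i := by
    funext β; simp [softmax, div_eq_mul_inv]
  rw [hfun]
  refine HasFDerivAt.congr_fderiv hraw (Eq.symm ?_)
  refine ContinuousLinearMap.ext fun v => ?_
  simp only [ContinuousLinearMap.sum_apply, ContinuousLinearMap.smul_apply,
    ContinuousLinearMap.add_apply, ContinuousLinearMap.proj_apply, smul_eq_mul,
    softmax, div_eq_mul_inv, Function.comp_apply]
  exact aux_sum_identity _ _ _ _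

theorem permLayer_grad_confidence_bound {c : ℕ} (hc : 0 < c) (y : Fin c)
    (M : ℝ) (hM : 0 ≤ M)
    (ℓ : (Fin c → ℝ) → (Fin c → ℝ) → ℝ)
    (hdiff : ∀ p : Fin c → ℝ,
      DifferentiableAt ℝ (fun q => ℓ q (Pi.single y (1 : ℝ))) p)
    (hgrad : ∀ p : Fin c → ℝ,
      Finset.univ.sup' ⟨y, Finset.mem_univ y⟩ p -
          Finset.univ.inf' ⟨y, Finset.mem_univ y⟩ p < 1 / c →
      ∑ j, |fderiv ℝ (fun q => ℓ q (Pi.single y (1 : ℝ))) p (Pi.single j 1)| ≤ M)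
    (f : Fin c → ℝ) (hf : ∀ i, 0 ≤ f i) (hfsum : ∑ i, f i = 1)
    (hrange : Finset.univ.sup' ⟨y, Finset.mem_univ y⟩ f -
        Finset.univ.inf' ⟨y, Finset.mem_univ y⟩ f < 1 / c) :
    ∀ α : Fin c → ℝ,
      ∑ j, |fderiv ℝ
          (fun β : Fin c → ℝ => ℓ ((permLayer β y).mulVec f) (Pi.single y (1 : ℝ)))
          α (Pi.single j 1)| ≤
        c * M / 4 *
          (Finset.univ.sup' ⟨y, Finset.mem_univ y⟩ f -
            Finset.univ.inf' ⟨y, Finset.mem_univ y⟩ f) := by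
  intro α
  set hne : (Finset.univ : Finset (Fin c)).Nonempty := ⟨y, Finset.mem_univ y⟩ with hnedef
  set Mx := Finset.univ.sup' hne f with hMx
  set mn := Finset.univ.inf' hne f with hmn
  set R := Mx - mn with hR
  -- basic facts about f
  have hfle : ∀ i : Fin c, f i ≤ Mx := fun i => Finset.le_sup' f (mem_univ i)
  have hfge : ∀ i : Fin c, mn ≤ f i := fun i => Finset.inf'_le f (mem_univ i)
  have hR0 : 0 ≤ R := by
    have := (hfge y).trans (hfle y); linarith [this]
  -- notation
  set g : Fin c → Fin c → ℝ := fun i k => f (Equiv.swap y i k) with hg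
  set p : Fin c → ℝ := fun k => ∑ i, softmax α i * g i k with hp
  have hS0 : ∀ i, 0 ≤ softmax α i := softmax_nonneg hc α
  have hS1 : ∑ i, softmax α i = 1 := softmax_sum hc α
  have hSle : ∀ i, softmax α i ≤ 1 := softmax_le_one hc α
  -- p stays in [mn, Mx]
  have hp_le : ∀ k, p k ≤ Mx := by
    intro k
    calc p k ≤ ∑ i, softmax α i * Mx :=
          Finset.sum_le_sum fun i _ => mul_le_mul_of_nonneg_left (hfle _) (hS0 i)
      _ = Mx := by rw [← Finset.sum_mul, hS1, one_mul]
  have hp_ge : ∀ k, mn ≤ p k := by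
    intro k
    calc mn = ∑ i, softmax α i * mn := by rw [← Finset.sum_mul, hS1, one_mul]
      _ ≤ p k := Finset.sum_le_sum fun i _ => mul_le_mul_of_nonneg_left (hfge _) (hS0 i)
  -- derivative of the inner map
  set Φ : (Fin c → ℝ) →L[ℝ] (Fin c → ℝ) := ContinuousLinearMap.pi
    (fun k => ∑ j, (softmax α j * (g j k - p k)) •
      (ContinuousLinearMap.proj j : (Fin c → ℝ) →L[ℝ] ℝ)) with hΦ
  have hφd : HasFDerivAt (fun β : Fin c → ℝ => fun k => ∑ i, softmax β i * g i k) Φ α :=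
    hasFDerivAt_pi.2 fun k => softmax_comb_hasFDerivAt hc α (fun i => g i k)
  -- compose with ℓ
  set D := fderiv ℝ (fun q => ℓ q (Pi.single y (1 : ℝ))) p with hD
  have hcomp : HasFDerivAt
      (fun β : Fin c → ℝ => ℓ (fun k => ∑ i, softmax β i * g i k) (Pi.single y (1 : ℝ)))
      (D.comp Φ) α := by have := (hdiff p).hasFDerivAt.comp α hφd; exact this
  have hfuneq : (fun β : Fin c → ℝ => ℓ ((permLayer β y).mulVec f) (Pi.single y (1 : ℝ)))
      = fun β : Fin c → ℝ => ℓ (fun k => ∑ i, softmax β i * g i k) (Pi.single y (1 : ℝ)) := by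
    funext β; rw [permLayer_mulVec]
  have hfd : fderiv ℝ
      (fun β : Fin c → ℝ => ℓ ((permLayer β y).mulVec f) (Pi.single y (1 : ℝ))) α
      = D.comp Φ := by
    rw [hfuneq]; exact hcomp.fderiv
  -- gradient bound at p
  have hgp : ∑ k, |D (Pi.single k 1)| ≤ M := by
    apply hgrad p
    have h1 : Finset.univ.sup' hne p ≤ Mx := Finset.sup'_le _ _ fun k _ => hp_le k
    have h2 : mn ≤ Finset.univ.inf' hne p := Finset.le_inf' _ _ fun k _ => hp_ge k
    calc Finset.univ.sup' hne p - Finset.univ.inf' hne p ≤ Mx - mn := by linarith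
      _ < 1 / c := hrange
  -- evaluation of Φ on basis vectors
  have hΦj : ∀ j, Φ (Pi.single j 1) = fun k => softmax α j * (g j k - p k) := by
    intro j; funext k
    simp only [hΦ, ContinuousLinearMap.pi_apply, ContinuousLinearMap.sum_apply,
      ContinuousLinearMap.smul_apply, ContinuousLinearMap.proj_apply, smul_eq_mul,
      Pi.single_apply]
    rw [Finset.sum_congr rfl (fun j' _ => by
      rw [show (softmax α j' * (g j' k - p k)) * (if j' = j then (1:ℝ) else 0)
        = if j' = j then softmax α j' * (g j' k - p k) else 0 from by split <;> ring])]
    rw [Finset.sum_ite_eq' univ j]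
    simp
  -- linear expansion of D
  have hDval : ∀ v : Fin c → ℝ, D v = ∑ k, v k * D (Pi.single k 1) := by
    intro v
    have hv : v = ∑ k, v k • (Pi.single k 1 : Fin c → ℝ) := by
      funext k'
      simp [Finset.sum_apply, Pi.single_apply, mul_ite, Finset.sum_ite_eq,
        Finset.sum_ite_eq']
    conv_lhs => rw [hv]
    rw [map_sum]
    exact Finset.sum_congr rfl fun k _ => by rw [_root_.map_smul, smul_eq_mul]
  -- bound |D v| by M * b for coordinate-wise bound b
  have habs : ∀ (v : Fin c → ℝ) (b : ℝ), 0 ≤ b → (∀ k, |v k| ≤ b) → |D v| ≤ M * b := by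
    intro v b hb0 hb
    rw [hDval]
    calc |∑ k, v k * D (Pi.single k 1)| ≤ ∑ k, |v k * D (Pi.single k 1)| :=
          Finset.abs_sum_le_sum_abs _ _
      _ ≤ ∑ k, b * |D (Pi.single k 1)| := Finset.sum_le_sum fun k _ => by
          rw [abs_mul]; exact mul_le_mul_of_nonneg_right (hb k) (abs_nonneg _)
      _ = b * ∑ k, |D (Pi.single k 1)| := by rw [Finset.mul_sum]
      _ ≤ b * M := mul_le_mul_of_nonneg_left hgp hb0
      _ = M * b := mul_comm _ _
  -- coordinate bound for the image of basis vectors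
  have hcoord : ∀ j k, |softmax α j * (g j k - p k)|
      ≤ softmax α j * ((1 - softmax α j) * R) := by
    intro j k
    have hgbd : |g j k - p k| ≤ (1 - softmax α j) * R := by
      have hrepr : g j k - p k = ∑ i, softmax α i * (g j k - g i k) := by
        rw [Finset.sum_congr rfl (fun i _ => mul_sub (softmax α i) (g j k) (g i k)),
          Finset.sum_sub_distrib, ← Finset.sum_mul, hS1, one_mul]
      rw [hrepr]
      calc |∑ i, softmax α i * (g j k - g i k)|
          ≤ ∑ i, |softmax α i * (g j k - g i k)| := Finset.abs_sum_le_sum_abs _ _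
        _ ≤ ∑ i, softmax α i * (if i = j then 0 else R) := by
            apply Finset.sum_le_sum
            intro i _
            rw [abs_mul, abs_of_nonneg (hS0 i)]
            apply mul_le_mul_of_nonneg_left _ (hS0 i)
            split
            · rename_i h; subst h; simp
            · rw [abs_sub_le_iff]
              constructor <;> [skip; skip] <;>
                (first
                  | (have := hfle (Equiv.swap y j k); have := hfge (Equiv.swap y i k);
                     have := hfle (Equiv.swap y i k); have := hfge (Equiv.swap y j k);
                     simp only [hg]; linarith))
        _ = (∑ i, softmax α i * R) - ∑ i, (if i = j then softmax α i * R else 0) := by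
            rw [← Finset.sum_sub_distrib]
            exact Finset.sum_congr rfl fun i _ => by split <;> ring
        _ = (1 - softmax α j) * R := by
            rw [← Finset.sum_mul, hS1, Finset.sum_ite_eq' univ j]
            simp; ring
    rw [abs_mul, abs_of_nonneg (hS0 j)]
    exact mul_le_mul_of_nonneg_left hgbd (hS0 j)
  -- put everything together
  rw [hfd]
  have hjbound : ∀ j : Fin c, |(D.comp Φ) (Pi.single j 1)| ≤ M * (R / 4) := by
    intro j
    rw [ContinuousLinearMap.comp_apply, hΦj j]
    have hb0 : 0 ≤ softmax α j * ((1 - softmax α j) * R) :=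
      mul_nonneg (hS0 j) (mul_nonneg (by linarith [hSle j]) hR0)
    have h1 : |D (fun k => softmax α j * (g j k - p k))|
        ≤ M * (softmax α j * ((1 - softmax α j) * R)) :=
      habs _ _ hb0 (fun k => hcoord j k)
    refine h1.trans ?_
    apply mul_le_mul_of_nonneg_left _ hM
    have hq : softmax α j * (1 - softmax α j) ≤ 1 / 4 := by
      nlinarith [sq_nonneg (softmax α j - 1 / 2)]
    calc softmax α j * ((1 - softmax α j) * R)
        = (softmax α j * (1 - softmax α j)) * R := by ring
      _ ≤ (1 / 4) * R := mul_le_mul_of_nonneg_right hq hR0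
      _ = R / 4 := by ring
  calc ∑ j, |(D.comp Φ) (Pi.single j 1)| ≤ ∑ _j : Fin c, M * (R / 4) :=
        Finset.sum_le_sum fun j _ => hjbound j
    _ = c * (M * (R / 4)) := by rw [Finset.sum_const, card_univ, Fintype.card_fin,
        nsmul_eq_mul]
    _ = c * M / 4 * R := by ring
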